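/- Suppose Assumption 1 (full rank) and Assumption 2 (no separation) both hold. Then there exists β̂ ∈ ℝ^p such that log L(β̂) ≥ log L(β) for all β ∈ ℝ^p, and any β̃ ∈ ℝ^p with log L(β̃) = log L(β̂) equals β̂. (Sufficiency direction of Theorem 1.) -/

import Mathlib

open scoped BigOperators RealInnerProductSpace

noncomputable section

/-- Real value of a binary indicator. -/
def bval (b : Bool) : ℝ := if b then 1 else 0

/-- The alternative set `B_i = {d ∈ {0,1}^T : ∑_t d_t = ∑_t Y_{it}}`. -/
def altSet (T : ℕ) (Yi : Fin T → Bool) : Finset (Fin T → Bool) :=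
  Finset.univ.filter fun d => (∑ t, (d t).toNat) = ∑ t, (Yi t).toNat

/-- The conditional log-likelihood `log L(β)`. -/
def logL {n T p : ℕ} (X : Fin n → Fin T → EuclideanSpace ℝ (Fin p))
    (Y : Fin n → Fin T → Bool) (β : EuclideanSpace ℝ (Fin p)) : ℝ :=
  ∑ i, ((∑ t, bval (Y i t) * ⟪X i t, β⟫) -
    Real.log (∑ d ∈ altSet T (Y i), Real.exp (∑ t, bval (d t) * ⟪X i t, β⟫)))

/-- The conditional-logit (softmax) weights `w_i(d; β)`. -/
def cweight {n T p : ℕ} (X : Fin n → Fin T → EuclideanSpace ℝ (Fin p))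
    (Y : Fin n → Fin T → Bool) (i : Fin n) (d : Fin T → Bool)
    (β : EuclideanSpace ℝ (Fin p)) : ℝ :=
  Real.exp (∑ t, bval (d t) * ⟪X i t, β⟫) /
    ∑ f ∈ altSet T (Y i), Real.exp (∑ t, bval (f t) * ⟪X i t, β⟫)

/-- Row index set of the matrix in Assumption 1: pairs `(i, d)` with `d ∈ B_i`. -/
abbrev RowIdx (n T : ℕ) (Y : Fin n → Fin T → Bool) :=
  (i : Fin n) × {d : Fin T → Bool // d ∈ altSet T (Y i)}

/-- The matrix of Assumption 1, evaluated at `β`. -/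
def rowMat {n T p : ℕ} (X : Fin n → Fin T → EuclideanSpace ℝ (Fin p))
    (Y : Fin n → Fin T → Bool) (β : EuclideanSpace ℝ (Fin p)) :
    Matrix (RowIdx n T Y) (Fin p) ℝ :=
  fun r k =>
    (∑ t, bval (r.2.1 t) * X r.1 t k) -
      ∑ e ∈ altSet T (Y r.1),
        cweight X Y r.1 e β * ∑ t, bval (e t) * X r.1 t k

/-- Assumption 1 (full rank). -/
def Assumption1 {n T p : ℕ} (X : Fin n → Fin T → EuclideanSpace ℝ (Fin p))
    (Y : Fin n → Fin T → Bool) : Prop :=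
  ∀ β : EuclideanSpace ℝ (Fin p), (rowMat X Y β).rank = p

/-- Assumption 2 (no separation). -/
def Assumption2 {n T p : ℕ} (X : Fin n → Fin T → EuclideanSpace ℝ (Fin p))
    (Y : Fin n → Fin T → Bool) : Prop :=
  ¬ ∃ βstar : EuclideanSpace ℝ (Fin p), βstar ≠ 0 ∧
      ∀ i, ∀ d ∈ altSet T (Y i),
        0 ≤ ∑ t, (bval (d t) - bval (Y i t)) * ⟪X i t, βstar⟫

/-- The vectors `v_{i,d} = ∑_t (d_t − Y_{it}) X_{it}`. -/
def vvec {n T p : ℕ} (X : Fin n → Fin T → EuclideanSpace ℝ (Fin p))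
    (Y : Fin n → Fin T → Bool) (i : Fin n) (d : Fin T → Bool) :
    EuclideanSpace ℝ (Fin p) :=
  ∑ t, (bval (d t) - bval (Y i t)) • X i t

namespace Stmt1Aux

variable {n T p : ℕ} (X : Fin n → Fin T → EuclideanSpace ℝ (Fin p))
    (Y : Fin n → Fin T → Bool)

lemma self_mem_altSet (Yi : Fin T → Bool) : Yi ∈ altSet T Yi := by
  simp [altSet]

lemma vvec_self (i : Fin n) : vvec X Y i (Y i) = 0 := by
  simp [vvec]

def S (i : Fin n) (β : EuclideanSpace ℝ (Fin p)) : ℝ :=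
  ∑ d ∈ altSet T (Y i), Real.exp ⟪vvec X Y i d, β⟫

def g (β : EuclideanSpace ℝ (Fin p)) : ℝ := ∑ i, Real.log (S X Y i β)

lemma inner_vvec (i : Fin n) (d : Fin T → Bool) (β : EuclideanSpace ℝ (Fin p)) :
    ⟪vvec X Y i d, β⟫ = ∑ t, (bval (d t) - bval (Y i t)) * ⟪X i t, β⟫ := by
  simp [vvec, sum_inner, real_inner_smul_left, PiLp.inner_apply, RCLike.inner_apply, conj_trivial, Finset.mul_sum, mul_assoc]
  exact Finset.sum_congr rfl fun _ _ => Finset.sum_congr rfl fun _ _ => by ring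

lemma inner_vvec' (i : Fin n) (d : Fin T → Bool) (β : EuclideanSpace ℝ (Fin p)) :
    ⟪vvec X Y i d, β⟫ =
      (∑ t, bval (d t) * ⟪X i t, β⟫) - ∑ t, bval (Y i t) * ⟪X i t, β⟫ := by
  rw [inner_vvec, ← Finset.sum_sub_distrib]
  exact Finset.sum_congr rfl fun t _ => by ring

lemma exp_le_S (i : Fin n) {d : Fin T → Bool} (hd : d ∈ altSet T (Y i))
    (β : EuclideanSpace ℝ (Fin p)) :
    Real.exp ⟪vvec X Y i d, β⟫ ≤ S X Y i β := by
  unfold S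
  exact Finset.single_le_sum (f := fun e => Real.exp ⟪vvec X Y i e, β⟫)
    (fun e _ => (Real.exp_pos _).le) hd

lemma one_le_S (i : Fin n) (β : EuclideanSpace ℝ (Fin p)) : 1 ≤ S X Y i β := by
  have h := exp_le_S X Y i (self_mem_altSet (Y i)) β
  rwa [vvec_self, inner_zero_left, Real.exp_zero] at h

lemma S_pos (i : Fin n) (β : EuclideanSpace ℝ (Fin p)) : 0 < S X Y i β :=
  lt_of_lt_of_le one_pos (one_le_S X Y i β)

lemma log_S_nonneg (i : Fin n) (β : EuclideanSpace ℝ (Fin p)) :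
    0 ≤ Real.log (S X Y i β) := Real.log_nonneg (one_le_S X Y i β)

lemma g_nonneg (β : EuclideanSpace ℝ (Fin p)) : 0 ≤ g X Y β :=
  Finset.sum_nonneg fun i _ => log_S_nonneg X Y i β

lemma inner_le_log_S (i : Fin n) {d : Fin T → Bool} (hd : d ∈ altSet T (Y i))
    (β : EuclideanSpace ℝ (Fin p)) :
    ⟪vvec X Y i d, β⟫ ≤ Real.log (S X Y i β) := by
  rw [← Real.log_exp ⟪vvec X Y i d, β⟫]
  exact Real.log_le_log (Real.exp_pos _) (exp_le_S X Y i hd β)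

lemma sumExp_pos (i : Fin n) (β : EuclideanSpace ℝ (Fin p)) :
    0 < ∑ d ∈ altSet T (Y i), Real.exp (∑ t, bval (d t) * ⟪X i t, β⟫) :=
  Finset.sum_pos (fun d _ => Real.exp_pos _) ⟨Y i, self_mem_altSet (Y i)⟩

lemma continuous_S (i : Fin n) : Continuous (S X Y i) :=
  continuous_finset_sum _ fun _ _ =>
    Real.continuous_exp.comp (continuous_const.inner continuous_id)

lemma continuous_g : Continuous (g X Y) :=
  continuous_finset_sum _ fun i _ =>
    (continuous_S X Y i).log fun β => (S_pos X Y i β).ne'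


variable {n T p : ℕ} (X : Fin n → Fin T → EuclideanSpace ℝ (Fin p))
    (Y : Fin n → Fin T → Bool)

lemma logL_eq (β : EuclideanSpace ℝ (Fin p)) : logL X Y β = - g X Y β := by
  unfold logL g
  rw [← Finset.sum_neg_distrib]
  refine Finset.sum_congr rfl fun i _ => ?_
  have hS : S X Y i β = (∑ d ∈ altSet T (Y i), Real.exp (∑ t, bval (d t) * ⟪X i t, β⟫)) *
      Real.exp (-(∑ t, bval (Y i t) * ⟪X i t, β⟫)) := by
    unfold S
    rw [Finset.sum_mul]
    refine Finset.sum_congr rfl fun d _ => ?_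
    rw [← Real.exp_add, inner_vvec']
    ring_nf
  rw [hS, Real.log_mul (sumExp_pos X Y i β).ne' (Real.exp_ne_zero _), Real.log_exp]
  ring

lemma a2_pos (h2 : ¬ ∃ βstar : EuclideanSpace ℝ (Fin p), βstar ≠ 0 ∧
      ∀ i, ∀ d ∈ altSet T (Y i),
        0 ≤ ∑ t, (bval (d t) - bval (Y i t)) * ⟪X i t, βstar⟫)
    (u : EuclideanSpace ℝ (Fin p)) (hu : u ≠ 0) :
    ∃ i, ∃ d ∈ altSet T (Y i), 0 < ⟪vvec X Y i d, u⟫ := by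
  by_contra h
  push_neg at h
  refine h2 ⟨-u, neg_ne_zero.mpr hu, fun i d hd => ?_⟩
  rw [← inner_vvec, inner_neg_right]
  exact neg_nonneg.mpr (h i d hd)

def psi (β : EuclideanSpace ℝ (Fin p)) : ℝ :=
  ∑ i, ∑ d ∈ altSet T (Y i), max ⟪vvec X Y i d, β⟫ 0

lemma psi_continuous : Continuous (psi X Y) :=
  continuous_finset_sum _ fun i _ => continuous_finset_sum _ fun _ _ =>
    (continuous_const.inner continuous_id).max continuous_const

lemma psi_smul (r : ℝ) (hr : 0 ≤ r) (β : EuclideanSpace ℝ (Fin p)) :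
    psi X Y (r • β) = r * psi X Y β := by
  unfold psi
  rw [Finset.mul_sum]
  refine Finset.sum_congr rfl fun i _ => ?_
  rw [Finset.mul_sum]
  refine Finset.sum_congr rfl fun d _ => ?_
  rw [real_inner_smul_right, mul_max_of_nonneg _ _ hr, mul_zero]

lemma psi_pos (h2 : ¬ ∃ βstar : EuclideanSpace ℝ (Fin p), βstar ≠ 0 ∧
      ∀ i, ∀ d ∈ altSet T (Y i),
        0 ≤ ∑ t, (bval (d t) - bval (Y i t)) * ⟪X i t, βstar⟫)
    (u : EuclideanSpace ℝ (Fin p)) (hu : u ≠ 0) : 0 < psi X Y u := by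
  obtain ⟨i, d, hd, hpos⟩ := a2_pos X Y h2 u hu
  refine Finset.sum_pos'
    (fun j _ => Finset.sum_nonneg fun e _ => le_max_right _ _)
    ⟨i, Finset.mem_univ i, ?_⟩
  exact Finset.sum_pos' (fun e _ => le_max_right _ _)
    ⟨d, hd, lt_max_iff.mpr (Or.inl hpos)⟩

lemma card_altSet_le (Yi : Fin T → Bool) : ((altSet T Yi).card : ℝ) ≤ (2:ℝ)^T := by
  have h1 : (altSet T Yi).card ≤ Fintype.card (Fin T → Bool) := Finset.card_le_univ _
  have h2 : Fintype.card (Fin T → Bool) = 2^T := by simp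
  have : ((altSet T Yi).card : ℝ) ≤ ((2^T : ℕ) : ℝ) := by exact_mod_cast h2 ▸ h1
  simpa using this

lemma psi_le (β : EuclideanSpace ℝ (Fin p)) : psi X Y β ≤ (2:ℝ)^T * g X Y β := by
  unfold psi g
  rw [Finset.mul_sum]
  refine Finset.sum_le_sum fun i _ => ?_
  have hbound : ∀ d ∈ altSet T (Y i), max ⟪vvec X Y i d, β⟫ 0 ≤ Real.log (S X Y i β) :=
    fun d hd => max_le (inner_le_log_S X Y i hd β) (log_S_nonneg X Y i β)
  calc ∑ d ∈ altSet T (Y i), max ⟪vvec X Y i d, β⟫ 0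
      ≤ (altSet T (Y i)).card • Real.log (S X Y i β) :=
        Finset.sum_le_card_nsmul _ _ _ hbound
    _ = ((altSet T (Y i)).card : ℝ) * Real.log (S X Y i β) := nsmul_eq_mul _ _
    _ ≤ (2:ℝ)^T * Real.log (S X Y i β) :=
        mul_le_mul_of_nonneg_right (card_altSet_le (Y i)) (log_S_nonneg X Y i β)


variable {n T p : ℕ} (X : Fin n → Fin T → EuclideanSpace ℝ (Fin p))
    (Y : Fin n → Fin T → Bool)

lemma exists_min (hp : 1 ≤ p)
    (h2 : ¬ ∃ βstar : EuclideanSpace ℝ (Fin p), βstar ≠ 0 ∧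
      ∀ i, ∀ d ∈ altSet T (Y i),
        0 ≤ ∑ t, (bval (d t) - bval (Y i t)) * ⟪X i t, βstar⟫) :
    ∃ bhat : EuclideanSpace ℝ (Fin p), ∀ β, g X Y bhat ≤ g X Y β := by
  haveI : Nonempty (Fin p) := ⟨⟨0, hp⟩⟩
  haveI : Nontrivial (EuclideanSpace ℝ (Fin p)) := by
    refine ⟨⟨0, EuclideanSpace.single ⟨0, hp⟩ 1, fun hc => ?_⟩⟩
    have := congrArg (fun v : EuclideanSpace ℝ (Fin p) => v ⟨0, hp⟩) hc
    simp [EuclideanSpace.single_apply] at this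
  obtain ⟨u0, hu0, hmin⟩ := (isCompact_sphere (0 : EuclideanSpace ℝ (Fin p)) 1).exists_isMinOn
    (NormedSpace.sphere_nonempty.mpr zero_le_one) (psi_continuous X Y).continuousOn
  have hu0n : ‖u0‖ = 1 := by simpa using hu0
  have hu0ne : u0 ≠ 0 := by
    intro h0; rw [h0, norm_zero] at hu0n; exact one_ne_zero hu0n.symm
  set c := psi X Y u0 with hc
  have hcpos : 0 < c := psi_pos X Y h2 u0 hu0ne
  have hco : ∀ β, c * ‖β‖ ≤ psi X Y β := by
    intro β
    rcases eq_or_ne β 0 with h0 | h0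
    · simp [h0, psi]
    · have hn : ‖β‖ ≠ 0 := norm_ne_zero_iff.mpr h0
      have hmem : ‖β‖⁻¹ • β ∈ Metric.sphere (0 : EuclideanSpace ℝ (Fin p)) 1 := by
        simp [norm_smul, abs_of_nonneg (inv_nonneg.mpr (norm_nonneg β)),
          inv_mul_cancel₀ hn]
      have h1 : c ≤ psi X Y (‖β‖⁻¹ • β) := hmin hmem
      rw [psi_smul X Y _ (inv_nonneg.mpr (norm_nonneg β)) β] at h1
      have h3 := mul_le_mul_of_nonneg_right h1 (norm_nonneg β)
      rwa [mul_comm (‖β‖⁻¹) _, mul_assoc, inv_mul_cancel₀ hn, mul_one] at h3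
  have h2T : (0:ℝ) < (2:ℝ)^T := by positivity
  set c2 := c / (2:ℝ)^T with hc2
  have hc2pos : 0 < c2 := div_pos hcpos h2T
  have hcoer : ∀ β, c2 * ‖β‖ ≤ g X Y β := by
    intro β
    have := (hco β).trans (psi_le X Y β)
    rw [hc2, div_mul_eq_mul_div, div_le_iff₀ h2T]
    nlinarith [norm_nonneg β]
  set R := g X Y 0 / c2 with hR
  have hR0 : 0 ≤ R := div_nonneg (g_nonneg X Y 0) hc2pos.le
  obtain ⟨bhat, hbK, hbm⟩ := (isCompact_closedBall (0 : EuclideanSpace ℝ (Fin p)) R).exists_isMinOn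
    ⟨0, Metric.mem_closedBall_self hR0⟩ (continuous_g X Y).continuousOn
  refine ⟨bhat, fun β => ?_⟩
  by_cases hβ : β ∈ Metric.closedBall (0 : EuclideanSpace ℝ (Fin p)) R
  · exact hbm hβ
  · have hβn : R < ‖β‖ := by
      rw [Metric.mem_closedBall, dist_zero_right] at hβ
      exact lt_of_not_ge hβ
    have hgb : g X Y bhat ≤ g X Y 0 := hbm (Metric.mem_closedBall_self hR0)
    have h4 : c2 * R = g X Y 0 := by
      rw [hR, mul_div_cancel₀ _ hc2pos.ne']
    have h5 := hcoer β
    nlinarith [mul_lt_mul_of_pos_left hβn hc2pos]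


variable {n T p : ℕ} (X : Fin n → Fin T → EuclideanSpace ℝ (Fin p))
    (Y : Fin n → Fin T → Bool)

lemma inner_coord {ι : Type*} [Fintype ι] (x u : EuclideanSpace ℝ ι) :
    ⟪x, u⟫ = ∑ k, x k * u k := by
  simp [PiLp.inner_apply, RCLike.inner_apply, conj_trivial]
  exact Finset.sum_congr rfl fun _ _ => mul_comm _ _

lemma sum_smul_apply {m q : ℕ} (s : Finset (Fin q)) (c : Fin q → ℝ)
    (f : Fin q → EuclideanSpace ℝ (Fin m)) (k : Fin m) :
    (∑ t ∈ s, c t • f t) k = ∑ t ∈ s, c t * f t k := by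
  induction s using Finset.induction with
  | empty => rfl
  | @insert a s h ih => rw [Finset.sum_insert h, Finset.sum_insert h, ← ih]; rfl

lemma sum_cweight (i : Fin n) (β : EuclideanSpace ℝ (Fin p)) :
    ∑ e ∈ altSet T (Y i), cweight X Y i e β = 1 := by
  unfold cweight
  rw [← Finset.sum_div, div_self (sumExp_pos X Y i β).ne']

lemma a1_inj (h1 : ∀ β : EuclideanSpace ℝ (Fin p), (rowMat X Y β).rank = p)
    (u : EuclideanSpace ℝ (Fin p))
    (hu : ∀ i, ∀ d ∈ altSet T (Y i), ⟪vvec X Y i d, u⟫ = 0) : u = 0 := by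
  by_contra hne
  classical
  set A : Fin n → (Fin T → Bool) → ℝ :=
    fun i e => ∑ k, (∑ t, bval (e t) * X i t k) * u k with hA
  have hAv : ∀ i, ∀ e ∈ altSet T (Y i), A i e = A i (Y i) := by
    intro i e he
    have hv := hu i e he
    have hiv : ⟪vvec X Y i e, u⟫ = A i e - A i (Y i) := by
      rw [inner_coord, hA, ← Finset.sum_sub_distrib]
      refine Finset.sum_congr rfl fun k _ => ?_
      rw [vvec, sum_smul_apply, ← sub_mul, ← Finset.sum_sub_distrib]
      congr 1
      exact Finset.sum_congr rfl fun t _ => by ring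
    have := hiv ▸ hv
    linarith [this.symm]
  have hker : (rowMat X Y 0).mulVecLin (fun k => u k) = 0 := by
    funext r
    obtain ⟨i, d, hd⟩ := r
    have hmv : ((rowMat X Y 0).mulVecLin fun k => u k) ⟨i, ⟨d, hd⟩⟩
        = ∑ k, rowMat X Y 0 ⟨i, ⟨d, hd⟩⟩ k * u k := by
      simp [Matrix.mulVecLin_apply, Matrix.mulVec, dotProduct]
    rw [hmv]
    have key : ∑ k, rowMat X Y 0 ⟨i, ⟨d, hd⟩⟩ k * u k
        = A i d - ∑ e ∈ altSet T (Y i), cweight X Y i e 0 * A i e := by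
      have e1 : ∀ k, rowMat X Y 0 ⟨i, ⟨d, hd⟩⟩ k * u k
          = (∑ t, bval (d t) * X i t k) * u k
            - ∑ e ∈ altSet T (Y i), cweight X Y i e 0 * ((∑ t, bval (e t) * X i t k) * u k) := by
        intro k
        show ((∑ t, bval (d t) * X i t k) -
            ∑ e ∈ altSet T (Y i), cweight X Y i e 0 * ∑ t, bval (e t) * X i t k) * u k = _
        rw [sub_mul]
        congr 1
        rw [Finset.sum_mul]
        exact Finset.sum_congr rfl fun e _ => by ring
      rw [Finset.sum_congr rfl fun k _ => e1 k, Finset.sum_sub_distrib]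
      congr 1
      rw [Finset.sum_comm]
      exact Finset.sum_congr rfl fun e _ => by rw [← Finset.mul_sum]
    rw [key, Finset.sum_congr rfl (fun e he => by rw [hAv i e he]), ← Finset.sum_mul,
      sum_cweight, one_mul, hAv i d hd, sub_self]
    rfl
  have hu' : (fun k => u k) ≠ (0 : Fin p → ℝ) :=
    fun hc => hne (PiLp.ext fun k => by simpa using congrFun hc k)
  have hmem : (fun k => u k) ∈ LinearMap.ker (rowMat X Y 0).mulVecLin :=
    LinearMap.mem_ker.mpr hker
  have hrn := LinearMap.finrank_range_add_finrank_ker (rowMat X Y 0).mulVecLin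
  have hdom : Module.finrank ℝ (Fin p → ℝ) = p := by simp
  have hrank : Module.finrank ℝ (LinearMap.range (rowMat X Y 0).mulVecLin) = p := h1 0
  have hker0 : Module.finrank ℝ (LinearMap.ker (rowMat X Y 0).mulVecLin) = 0 := by
    omega
  have hbot : LinearMap.ker (rowMat X Y 0).mulVecLin = ⊥ :=
    Submodule.finrank_eq_zero.mp hker0
  rw [hbot, Submodule.mem_bot] at hmem
  exact hu' hmem


variable {n T p : ℕ} (X : Fin n → Fin T → EuclideanSpace ℝ (Fin p))
    (Y : Fin n → Fin T → Bool)

lemma midpoint_le_and_eq (i : Fin n) (β γ : EuclideanSpace ℝ (Fin p)) :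
    Real.log (S X Y i ((1/2 : ℝ) • (β + γ)))
      ≤ (Real.log (S X Y i β) + Real.log (S X Y i γ)) / 2 ∧
    (Real.log (S X Y i ((1/2 : ℝ) • (β + γ)))
        = (Real.log (S X Y i β) + Real.log (S X Y i γ)) / 2 →
      ∀ d ∈ altSet T (Y i), ⟪vvec X Y i d, β⟫ = ⟪vvec X Y i d, γ⟫) := by
  classical
  set m : EuclideanSpace ℝ (Fin p) := (1/2 : ℝ) • (β + γ) with hm
  set x : EuclideanSpace ℝ (altSet T (Y i)) :=
    WithLp.toLp 2 (fun d : altSet T (Y i) => Real.exp (⟪vvec X Y i d.1, β⟫ / 2)) with hx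
  set y : EuclideanSpace ℝ (altSet T (Y i)) :=
    WithLp.toLp 2 (fun d : altSet T (Y i) => Real.exp (⟪vvec X Y i d.1, γ⟫ / 2)) with hy
  have hxy : ⟪x, y⟫ = S X Y i m := by
    rw [inner_coord]
    calc ∑ d : altSet T (Y i), x d * y d
        = ∑ d : altSet T (Y i), Real.exp ⟪vvec X Y i d.1, m⟫ := by
          refine Finset.sum_congr rfl fun d _ => ?_
          rw [hx, hy, WithLp.ofLp_toLp, WithLp.ofLp_toLp, ← Real.exp_add]
          congr 1
          rw [hm, real_inner_smul_right, inner_add_right]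
          ring
      _ = S X Y i m := Finset.sum_coe_sort _ (fun d => Real.exp ⟪vvec X Y i d, m⟫)
  have hxx : ⟪x, x⟫ = S X Y i β := by
    rw [inner_coord]
    calc ∑ d : altSet T (Y i), x d * x d
        = ∑ d : altSet T (Y i), Real.exp ⟪vvec X Y i d.1, β⟫ := by
          refine Finset.sum_congr rfl fun d _ => ?_
          rw [hx, WithLp.ofLp_toLp, ← Real.exp_add]
          congr 1
          ring
      _ = S X Y i β := Finset.sum_coe_sort _ (fun d => Real.exp ⟪vvec X Y i d, β⟫)
  have hyy : ⟪y, y⟫ = S X Y i γ := by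
    rw [inner_coord]
    calc ∑ d : altSet T (Y i), y d * y d
        = ∑ d : altSet T (Y i), Real.exp ⟪vvec X Y i d.1, γ⟫ := by
          refine Finset.sum_congr rfl fun d _ => ?_
          rw [hy, WithLp.ofLp_toLp, ← Real.exp_add]
          congr 1
          ring
      _ = S X Y i γ := Finset.sum_coe_sort _ (fun d => Real.exp ⟪vvec X Y i d, γ⟫)
  have hnx : ‖x‖ * ‖x‖ = S X Y i β := by
    rw [← real_inner_self_eq_norm_mul_norm]; exact hxx
  have hny : ‖y‖ * ‖y‖ = S X Y i γ := by
    rw [← real_inner_self_eq_norm_mul_norm]; exact hyy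
  have hxpos : 0 < ‖x‖ := by
    by_contra h
    push_neg at h
    have h0 : ‖x‖ = 0 := le_antisymm h (norm_nonneg x)
    rw [h0, mul_zero] at hnx
    exact (S_pos X Y i β).ne hnx
  have hypos : 0 < ‖y‖ := by
    by_contra h
    push_neg at h
    have h0 : ‖y‖ = 0 := le_antisymm h (norm_nonneg y)
    rw [h0, mul_zero] at hny
    exact (S_pos X Y i γ).ne hny
  have hlog : (Real.log (S X Y i β) + Real.log (S X Y i γ)) / 2
      = Real.log (‖x‖ * ‖y‖) := by
    rw [← hnx, ← hny, Real.log_mul hxpos.ne' hxpos.ne', Real.log_mul hypos.ne' hypos.ne',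
      Real.log_mul hxpos.ne' hypos.ne']
    ring
  have hineq : Real.log (S X Y i m) ≤ Real.log (‖x‖ * ‖y‖) := by
    rw [← hxy]
    exact Real.log_le_log (by rw [hxy]; exact S_pos X Y i m) (real_inner_le_norm x y)
  refine ⟨by rw [hlog]; exact hineq, ?_⟩
  intro heq d hd
  have hinner_eq : ⟪x, y⟫ = ‖x‖ * ‖y‖ := by
    have hl : Real.log ⟪x, y⟫ = Real.log (‖x‖ * ‖y‖) := by
      rw [hxy, ← hlog]; exact heq
    have hp1 : (0:ℝ) < ⟪x, y⟫ := by rw [hxy]; exact S_pos X Y i m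
    have hp2 : (0:ℝ) < ‖x‖ * ‖y‖ := mul_pos hxpos hypos
    calc ⟪x, y⟫ = Real.exp (Real.log ⟪x, y⟫) := (Real.exp_log hp1).symm
      _ = Real.exp (Real.log (‖x‖ * ‖y‖)) := by rw [hl]
      _ = ‖x‖ * ‖y‖ := Real.exp_log hp2
  have hsm := inner_eq_norm_mul_iff_real.mp hinner_eq
  have hx0 : x ⟨Y i, self_mem_altSet (Y i)⟩ = 1 := by
    show Real.exp (⟪vvec X Y i (Y i), β⟫ / 2) = 1
    rw [vvec_self, inner_zero_left, zero_div, Real.exp_zero]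
  have hy0 : y ⟨Y i, self_mem_altSet (Y i)⟩ = 1 := by
    show Real.exp (⟪vvec X Y i (Y i), γ⟫ / 2) = 1
    rw [vvec_self, inner_zero_left, zero_div, Real.exp_zero]
  have h0 := congrArg
    (fun v : EuclideanSpace ℝ (altSet T (Y i)) => v ⟨Y i, self_mem_altSet (Y i)⟩) hsm
  simp only [PiLp.smul_apply, smul_eq_mul] at h0
  rw [hx0, hy0, mul_one, mul_one] at h0
  rw [h0] at hsm
  have hxy_eq : x = y := smul_right_injective (EuclideanSpace ℝ (altSet T (Y i))) hxpos.ne' hsm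
  have happ := congrArg (fun v : EuclideanSpace ℝ (altSet T (Y i)) => v ⟨d, hd⟩) hxy_eq
  have hexp : Real.exp (⟪vvec X Y i d, β⟫ / 2) = Real.exp (⟪vvec X Y i d, γ⟫ / 2) := happ
  have := Real.exp_injective hexp
  linarith

end Stmt1Aux

/-- Sufficiency direction of Theorem 1. -/
theorem stmt1 {n T p : ℕ} (hn : 1 ≤ n) (hT : 1 ≤ T) (hp : 1 ≤ p)
    (X : Fin n → Fin T → EuclideanSpace ℝ (Fin p)) (Y : Fin n → Fin T → Bool)
    (h1 : Assumption1 X Y) (h2 : Assumption2 X Y) :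
    ∃ bhat : EuclideanSpace ℝ (Fin p),
      (∀ β, logL X Y β ≤ logL X Y bhat) ∧
      ∀ btilde : EuclideanSpace ℝ (Fin p),
        logL X Y btilde = logL X Y bhat → btilde = bhat := by
  classical
  have h1' : ∀ β : EuclideanSpace ℝ (Fin p), (rowMat X Y β).rank = p := h1
  have h2' : ¬ ∃ βstar : EuclideanSpace ℝ (Fin p), βstar ≠ 0 ∧
      ∀ i, ∀ d ∈ altSet T (Y i),
        0 ≤ ∑ t, (bval (d t) - bval (Y i t)) * ⟪X i t, βstar⟫ := h2
  obtain ⟨bhat, hmin⟩ := Stmt1Aux.exists_min X Y hp h2'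
  refine ⟨bhat, fun β => ?_, fun btilde hbt => ?_⟩
  · rw [Stmt1Aux.logL_eq, Stmt1Aux.logL_eq]
    exact neg_le_neg (hmin β)
  · rw [Stmt1Aux.logL_eq, Stmt1Aux.logL_eq, neg_inj] at hbt
    set m : EuclideanSpace ℝ (Fin p) := (1/2 : ℝ) • (bhat + btilde) with hm
    have hle : ∀ i ∈ (Finset.univ : Finset (Fin n)),
        Real.log (Stmt1Aux.S X Y i m)
          ≤ (Real.log (Stmt1Aux.S X Y i bhat) + Real.log (Stmt1Aux.S X Y i btilde)) / 2 :=
      fun i _ => (Stmt1Aux.midpoint_le_and_eq X Y i bhat btilde).1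
    have hsum : ∑ i, Real.log (Stmt1Aux.S X Y i m)
        = ∑ i, (Real.log (Stmt1Aux.S X Y i bhat) + Real.log (Stmt1Aux.S X Y i btilde)) / 2 := by
      have hrhs : ∑ i, (Real.log (Stmt1Aux.S X Y i bhat)
          + Real.log (Stmt1Aux.S X Y i btilde)) / 2
          = (Stmt1Aux.g X Y bhat + Stmt1Aux.g X Y btilde) / 2 := by
        unfold Stmt1Aux.g
        rw [← Finset.sum_add_distrib, Finset.sum_div]
      have hup : ∑ i, Real.log (Stmt1Aux.S X Y i m)
          ≤ ∑ i, (Real.log (Stmt1Aux.S X Y i bhat) + Real.log (Stmt1Aux.S X Y i btilde)) / 2 :=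
        Finset.sum_le_sum hle
      have hdown : (Stmt1Aux.g X Y bhat + Stmt1Aux.g X Y btilde) / 2
          ≤ ∑ i, Real.log (Stmt1Aux.S X Y i m) := by
        have hm' := hmin m
        unfold Stmt1Aux.g at hm' hbt ⊢
        linarith
      linarith [hrhs ▸ hdown]
    have hptw := fun i hi => (Finset.sum_eq_sum_iff_of_le hle).mp hsum i hi
    have hinner : ∀ i, ∀ d ∈ altSet T (Y i), ⟪vvec X Y i d, btilde - bhat⟫ = 0 := by
      intro i d hd
      have heq := (Stmt1Aux.midpoint_le_and_eq X Y i bhat btilde).2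
        (hptw i (Finset.mem_univ i)) d hd
      rw [inner_sub_right, ← heq, sub_self]
    have hz := Stmt1Aux.a1_inj X Y h1' _ hinner
    have hzz : btilde - bhat = 0 := hz
    rw [sub_eq_zero] at hzz
    exact hzz
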